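/- Let 1 ≤ n' ≤ n, let α = {1,…,n'}, and let M be a matroid on N_n with r_M(N_n) ≥ 2 whose rank function spans an extreme ray of Γ_n. Suppose M has a circuit C with |C| ≥ 3 and 1 ≤ |C ∩ α| ≤ |C| − 1, such that it is not the case that |C| = 3 and |C ∩ α| = 2. If a, b > 0 and a·r_M + b·r_{U_{1,α}} is entropic, then a = log v for some integer v ≥ 2. -/

import Mathlib

open Finset

/-- Shannon entropy (natural log) of the random variable `X : Ω → S`
under the probability mass function `p : Ω → ℝ`. -/
noncomputable def Hent {Ω S : Type} [Fintype Ω] [DecidableEq S]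
    (p : Ω → ℝ) (X : Ω → S) : ℝ :=
  ∑ s ∈ Finset.univ.image X,
    Real.negMulLog (∑ ω ∈ Finset.univ.filter (fun ω => X ω = s), p ω)

/-- The joint random variable `(X_i)_{i ∈ A}`. -/
def joint {Ω : Type} {n : ℕ} (X : Fin n → Ω → ℕ) (A : Finset (Fin n)) :
    Ω → (A → ℕ) :=
  fun ω i => X i ω

/-- A set function `h : 2^{N_n} → ℝ` is entropic if it is the entropy function of
some random vector `(X_1, …, X_n)` on a finite probability space. -/
def IsEntropic {n : ℕ} (h : Finset (Fin n) → ℝ) : Prop :=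
  ∃ (N : ℕ) (p : Fin N → ℝ) (X : Fin n → Fin N → ℕ),
    (∀ ω, 0 ≤ p ω) ∧ (∑ ω, p ω) = 1 ∧
    ∀ A : Finset (Fin n), h A = Hent p (joint X A)

/-- The polymatroidal region Γ_n. -/
def PolymatroidRegion (n : ℕ) : Set (Finset (Fin n) → ℝ) :=
  {h | h ∅ = 0 ∧ (∀ A, 0 ≤ h A) ∧ (∀ A B, A ⊆ B → h A ≤ h B) ∧
       (∀ A B, h (A ∩ B) + h (A ∪ B) ≤ h A + h B)}

/-- A nonzero `h ∈ Γ_n` spans an extreme ray of `Γ_n` if whenever `h₁, h₂ ∈ Γ_n` and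
`h₁ + h₂` is a nonnegative multiple of `h`, both `h₁` and `h₂` are nonnegative
multiples of `h`. -/
def SpansExtremeRay {n : ℕ} (h : Finset (Fin n) → ℝ) : Prop :=
  h ∈ PolymatroidRegion n ∧ h ≠ 0 ∧
  ∀ h₁ h₂ : Finset (Fin n) → ℝ, h₁ ∈ PolymatroidRegion n → h₂ ∈ PolymatroidRegion n →
    (∃ c : ℝ, 0 ≤ c ∧ h₁ + h₂ = c • h) →
    (∃ c₁ : ℝ, 0 ≤ c₁ ∧ h₁ = c₁ • h) ∧ (∃ c₂ : ℝ, 0 ≤ c₂ ∧ h₂ = c₂ • h)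

/-- `F ⊆ Γ_n` is a face of `Γ_n` if whenever `h₁, h₂ ∈ Γ_n` and `h₁ + h₂ ∈ F`,
both `h₁` and `h₂` lie in `F`. -/
def IsFace (n : ℕ) (F : Set (Finset (Fin n) → ℝ)) : Prop :=
  F ⊆ PolymatroidRegion n ∧
  ∀ h₁ h₂ : Finset (Fin n) → ℝ, h₁ ∈ PolymatroidRegion n → h₂ ∈ PolymatroidRegion n →
    h₁ + h₂ ∈ F → h₁ ∈ F ∧ h₂ ∈ F

/-- A matroid on ground set `N_n`, given by its rank function. -/
structure MatroidRk (n : ℕ) where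
  r : Finset (Fin n) → ℕ
  le_card : ∀ A, r A ≤ A.card
  mono : ∀ ⦃A B : Finset (Fin n)⦄, A ⊆ B → r A ≤ r B
  submod : ∀ A B : Finset (Fin n), r (A ∩ B) + r (A ∪ B) ≤ r A + r B

/-- The rank function of a matroid, viewed as a real-valued set function. -/
def MatroidRk.rr {n : ℕ} (M : MatroidRk n) : Finset (Fin n) → ℝ :=
  fun A => (M.r A : ℝ)

/-- A set is independent if its rank equals its cardinality. -/
def MatroidRk.Indep {n : ℕ} (M : MatroidRk n) (A : Finset (Fin n)) : Prop :=
  M.r A = A.card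

/-- A circuit is a minimal dependent set. -/
def MatroidRk.IsCircuit {n : ℕ} (M : MatroidRk n) (C : Finset (Fin n)) : Prop :=
  ¬ M.Indep C ∧ ∀ A ⊂ C, M.Indep A

/-- An element is a loop if its rank is zero. -/
def MatroidRk.IsLoop {n : ℕ} (M : MatroidRk n) (e : Fin n) : Prop :=
  M.r {e} = 0

/-- Two distinct elements are parallel if each has rank one and together they have rank one. -/
def MatroidRk.Parallel {n : ℕ} (M : MatroidRk n) (e f : Fin n) : Prop :=
  e ≠ f ∧ M.r {e} = 1 ∧ M.r {f} = 1 ∧ M.r {e, f} = 1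

/-- The subset `{1, …, k}` of `N_n` (in `Fin n`, the elements with value `< k`). -/
def alphaSet (n k : ℕ) : Finset (Fin n) :=
  Finset.univ.filter (fun i => (i : ℕ) < k)

/-- The rank function of the rank-one matroid `U_{1,k}^n`:
`A ↦ 1` if `A ∩ {1, …, k} ≠ ∅` and `0` otherwise. -/
def rUone (n k : ℕ) : Finset (Fin n) → ℝ :=
  fun A => if (A ∩ alphaSet n k).Nonempty then 1 else 0

/-- The rank function of the uniform matroid `U_{n-1,n}`: `A ↦ min (n-1) |A|`. -/
def rUnif (n : ℕ) : Finset (Fin n) → ℝ :=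
  fun A => ((min (n - 1) A.card : ℕ) : ℝ)

/-- The p-characteristic set `χ_M` of a matroid `M`. -/
def chi {n : ℕ} (M : MatroidRk n) : Set ℤ :=
  {v | 2 ≤ v ∧ IsEntropic (fun A => Real.log (v : ℝ) * M.rr A)}


/- ===================== Auxiliary lemmas ===================== -/

open scoped Classical in
/-- mass of a predicate -/
noncomputable def mp {Ω : Type} [Fintype Ω] (p : Ω → ℝ) (P : Ω → Prop) : ℝ :=
  ∑ ω, if P ω then p ω else 0

section mpLemmas

variable {Ω : Type} [Fintype Ω] {p : Ω → ℝ}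

lemma mp_nonneg (hp : ∀ ω, 0 ≤ p ω) (P : Ω → Prop) : 0 ≤ mp p P := by
  classical
  unfold mp
  exact Finset.sum_nonneg (fun ω _ => by split <;> simp [hp ω])

lemma mp_mono (hp : ∀ ω, 0 ≤ p ω) {P Q : Ω → Prop} (h : ∀ ω, P ω → Q ω) :
    mp p P ≤ mp p Q := by
  classical
  unfold mp
  apply Finset.sum_le_sum
  intro ω _
  by_cases hP : P ω
  · simp [hP, h ω hP]
  · simp only [hP, if_false]
    split <;> simp [hp ω]

lemma mp_congr {P Q : Ω → Prop} (h : ∀ ω, P ω ↔ Q ω) : mp p P = mp p Q := by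
  classical
  unfold mp; apply Finset.sum_congr rfl; intro ω _; simp [h ω]

lemma mp_congr_pos (hp : ∀ ω, 0 ≤ p ω) {P Q : Ω → Prop}
    (h : ∀ ω, 0 < p ω → (P ω ↔ Q ω)) : mp p P = mp p Q := by
  classical
  unfold mp; apply Finset.sum_congr rfl; intro ω _
  rcases (hp ω).lt_or_eq with hpos | hzero
  · simp [h ω hpos]
  · split <;> split <;> simp [← hzero]

lemma mp_pos (hp : ∀ ω, 0 ≤ p ω) {P : Ω → Prop} (ω₀ : Ω) (h0 : 0 < p ω₀) (hP : P ω₀) :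
    0 < mp p P := by
  classical
  unfold mp
  have : (if P ω₀ then p ω₀ else 0) ≤ ∑ ω, if P ω then p ω else 0 :=
    Finset.single_le_sum (f := fun ω => if P ω then p ω else 0)
      (fun ω _ => by split <;> simp [hp ω]) (Finset.mem_univ ω₀)
  simp only [hP, if_true] at this
  linarith

lemma mp_pos_elim (hp : ∀ ω, 0 ≤ p ω) {P : Ω → Prop} (h : 0 < mp p P) :
    ∃ ω, 0 < p ω ∧ P ω := by
  classical
  by_contra hc
  push_neg at hc
  have : mp p P = 0 := by
    unfold mp
    apply Finset.sum_eq_zero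
    intro ω _
    by_cases hP : P ω
    · simp only [hP, if_true]
      by_contra h'
      exact absurd hP (hc ω (lt_of_le_of_ne (hp ω) (Ne.symm h')))
    · simp [hP]
  linarith

lemma mp_eq_zero (hp : ∀ ω, 0 ≤ p ω) {P : Ω → Prop} (h : ∀ ω, 0 < p ω → ¬ P ω) :
    mp p P = 0 := by
  by_contra hc
  have h0 := mp_nonneg hp P
  obtain ⟨ω, hω, hPω⟩ := mp_pos_elim hp (lt_of_le_of_ne h0 (Ne.symm hc))
  exact h ω hω hPω

lemma mp_eq_zero' {P : Ω → Prop} (h : ∀ ω, ¬ P ω) : mp p P = 0 := by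
  classical
  unfold mp
  exact Finset.sum_eq_zero (fun ω _ => by simp [h ω])

lemma mp_true (hs : ∑ ω, p ω = 1) : mp p (fun _ => True) = 1 := by
  classical
  unfold mp; simpa using hs

/-- marginalization -/
lemma mp_marg {σ : Type} [DecidableEq σ] (P : Ω → Prop) (A : Ω → σ) (S : Finset σ)
    (hS : ∀ ω, A ω ∈ S) :
    ∑ s ∈ S, mp p (fun ω => P ω ∧ A ω = s) = mp p P := by
  classical
  unfold mp
  rw [Finset.sum_comm]
  apply Finset.sum_congr rfl
  intro ω _
  by_cases hP : P ω
  · simp only [hP, true_and, if_true]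
    rw [Finset.sum_ite_eq S (A ω) (fun _ => p ω)]
    simp [hS ω]
  · simp [hP]

lemma mem_image_self {σ : Type} [DecidableEq σ] (A : Ω → σ) (ω : Ω) :
    A ω ∈ Finset.univ.image A := Finset.mem_image.2 ⟨ω, Finset.mem_univ _, rfl⟩

end mpLemmas

section HentLemmas

variable {Ω S T : Type} [Fintype Ω] [DecidableEq S] [DecidableEq T] {p : Ω → ℝ}

lemma filter_sum_eq_mp (X : Ω → S) (s : S) :
    (∑ ω ∈ Finset.univ.filter (fun ω => X ω = s), p ω) = mp p (fun ω => X ω = s) := by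
  classical
  rw [mp, Finset.sum_filter]
  exact Finset.sum_congr rfl (fun ω _ => by congr)

lemma Hent_eq_sum_mp (X : Ω → S) :
    Hent p X = ∑ s ∈ Finset.univ.image X, Real.negMulLog (mp p (fun ω => X ω = s)) := by
  unfold Hent
  exact Finset.sum_congr rfl (fun s _ => by rw [filter_sum_eq_mp])

lemma mp_eq_zero_of_not_mem_image (X : Ω → S) {s : S} (h : s ∉ Finset.univ.image X) :
    mp p (fun ω => X ω = s) = 0 := by
  classical
  unfold mp
  apply Finset.sum_eq_zero
  intro ω _
  have : X ω ≠ s := fun he => h (Finset.mem_image.2 ⟨ω, Finset.mem_univ ω, he⟩)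
  simp [this]

lemma Hent_eq_sum_superset (X : Ω → S) (F : Finset S) (h : Finset.univ.image X ⊆ F) :
    Hent p X = ∑ s ∈ F, Real.negMulLog (mp p (fun ω => X ω = s)) := by
  rw [Hent_eq_sum_mp]
  apply Finset.sum_subset h
  intro s _ hs
  rw [mp_eq_zero_of_not_mem_image X hs, Real.negMulLog_zero]

/-- fibers determine entropy -/
lemma Hent_congr (X : Ω → S) (Y : Ω → T)
    (h : ∀ ω₁ ω₂, X ω₁ = X ω₂ ↔ Y ω₁ = Y ω₂) : Hent p X = Hent p Y := by
  classical
  rw [Hent_eq_sum_mp, Hent_eq_sum_mp]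
  apply Finset.sum_bij (i := fun s hs => Y (Finset.mem_image.1 hs).choose)
  · intro s hs
    exact Finset.mem_image.2 ⟨(Finset.mem_image.1 hs).choose, Finset.mem_univ _, rfl⟩
  · intro s₁ hs₁ s₂ hs₂ heq
    obtain ⟨_, hX₁⟩ := (Finset.mem_image.1 hs₁).choose_spec
    obtain ⟨_, hX₂⟩ := (Finset.mem_image.1 hs₂).choose_spec
    rw [← hX₁, ← hX₂]
    exact (h _ _).2 heq
  · intro t ht
    obtain ⟨ω, _, hω⟩ := Finset.mem_image.1 ht
    have hs : X ω ∈ Finset.univ.image X := Finset.mem_image.2 ⟨ω, Finset.mem_univ _, rfl⟩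
    refine ⟨X ω, hs, ?_⟩
    obtain ⟨_, hX⟩ := (Finset.mem_image.1 hs).choose_spec
    rw [← hω]
    exact (h _ _).1 hX
  · intro s hs
    congr 1
    obtain ⟨_, hX⟩ := (Finset.mem_image.1 hs).choose_spec
    apply mp_congr
    intro ω
    constructor
    · intro he; rw [← hX] at he; exact (h _ _).1 he
    · intro he; rw [← hX]; exact (h _ _).2 he

lemma Hent_const [Nonempty Ω] (hs : ∑ ω, p ω = 1) (c : S) :
    Hent p (fun _ => c) = 0 := by
  rw [Hent_eq_sum_mp]
  have himg : Finset.univ.image (fun _ : Ω => c) = {c} := Finset.image_const Finset.univ_nonempty c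
  rw [himg, Finset.sum_singleton]
  have : mp p (fun ω => (fun _ : Ω => c) ω = c) = 1 := by
    rw [mp_congr (Q := fun _ => True) (fun ω => by simp), mp_true hs]
  rw [this, Real.negMulLog_one]

end HentLemmas

section Core2

variable {Ω S T : Type} [Fintype Ω] [DecidableEq S] [DecidableEq T] {p : Ω → ℝ}

lemma negMulLog_le_of_le {x T : ℝ} (hx : 0 ≤ x) (hT : x ≤ T) :
    -(x * Real.log T) ≤ Real.negMulLog x := by
  rcases hx.lt_or_eq with hpos | hzero
  · have : Real.log x ≤ Real.log T := Real.log_le_log hpos hT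
    rw [Real.negMulLog]
    nlinarith
  · simp [← hzero, Real.negMulLog]

lemma negMulLog_sum_le (F : Finset S) (f : S → ℝ) (hf : ∀ s ∈ F, 0 ≤ f s) :
    Real.negMulLog (∑ s ∈ F, f s) ≤ ∑ s ∈ F, Real.negMulLog (f s) := by
  have hT : ∀ s ∈ F, f s ≤ ∑ s ∈ F, f s := fun s hs => Finset.single_le_sum hf hs
  have h1 : Real.negMulLog (∑ s ∈ F, f s) = ∑ s ∈ F, -(f s * Real.log (∑ s ∈ F, f s)) := by
    rw [Real.negMulLog, neg_mul, Finset.sum_mul, ← Finset.sum_neg_distrib]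
  rw [h1]
  exact Finset.sum_le_sum (fun s hs => negMulLog_le_of_le (hf s hs) (hT s hs))

lemma negMulLog_sum_eq_case (F : Finset S) (f : S → ℝ) (hf : ∀ s ∈ F, 0 ≤ f s)
    (heq : Real.negMulLog (∑ s ∈ F, f s) = ∑ s ∈ F, Real.negMulLog (f s)) :
    ∀ s ∈ F, f s = 0 ∨ f s = ∑ s ∈ F, f s := by
  have hT : ∀ s ∈ F, f s ≤ ∑ s ∈ F, f s := fun s hs => Finset.single_le_sum hf hs
  have h1 : Real.negMulLog (∑ s ∈ F, f s) = ∑ s ∈ F, -(f s * Real.log (∑ s ∈ F, f s)) := by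
    rw [Real.negMulLog, neg_mul, Finset.sum_mul, ← Finset.sum_neg_distrib]
  have hsum : ∑ s ∈ F, (Real.negMulLog (f s) - -(f s * Real.log (∑ s ∈ F, f s))) = 0 := by
    rw [Finset.sum_sub_distrib, ← h1, ← heq, sub_self]
  have hterm := (Finset.sum_eq_zero_iff_of_nonneg (fun s hs => by
    have := negMulLog_le_of_le (hf s hs) (hT s hs); linarith)).1 hsum
  intro s hs
  rcases (hf s hs).lt_or_eq with hpos | hzero
  · right
    have h0 := hterm s hs
    rw [Real.negMulLog] at h0
    have hlog : Real.log (f s) = Real.log (∑ s ∈ F, f s) := by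
      have : f s * (Real.log (∑ s ∈ F, f s) - Real.log (f s)) = 0 := by linarith
      rcases mul_eq_zero.1 this with h | h
      · linarith
      · linarith
    have hTpos : 0 < ∑ s ∈ F, f s := lt_of_lt_of_le hpos (hT s hs)
    calc f s = Real.exp (Real.log (f s)) := (Real.exp_log hpos).symm
      _ = Real.exp (Real.log (∑ s ∈ F, f s)) := by rw [hlog]
      _ = ∑ s ∈ F, f s := Real.exp_log hTpos
  · left; exact hzero.symm

/-- H(X,Y) = H(Y) implies Y determines X on positive atoms. -/
lemma determin (hp : ∀ ω, 0 ≤ p ω) (X : Ω → S) (Y : Ω → T)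
    (heq : Hent p (fun ω => (X ω, Y ω)) = Hent p Y) :
    ∀ ω₁ ω₂, 0 < p ω₁ → 0 < p ω₂ → Y ω₁ = Y ω₂ → X ω₁ = X ω₂ := by
  classical
  set Z := fun ω => (X ω, Y ω) with hZ
  have himg : Finset.univ.image Z ⊆ (Finset.univ.image X) ×ˢ (Finset.univ.image Y) := by
    intro z hz
    obtain ⟨ω, _, hω⟩ := Finset.mem_image.1 hz
    rw [← hω]
    exact Finset.mem_product.2 ⟨mem_image_self X ω, mem_image_self Y ω⟩
  have hZsum : Hent p Z = ∑ t ∈ Finset.univ.image Y, ∑ s ∈ Finset.univ.image X,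
      Real.negMulLog (mp p (fun ω => Z ω = (s, t))) := by
    rw [Hent_eq_sum_superset Z _ himg, Finset.sum_product]
    exact Finset.sum_comm
  have hmarg : ∀ t, mp p (fun ω => Y ω = t)
      = ∑ s ∈ Finset.univ.image X, mp p (fun ω => Z ω = (s, t)) := by
    intro t
    rw [← mp_marg (fun ω => Y ω = t) X (Finset.univ.image X) (fun ω => mem_image_self X ω)]
    exact Finset.sum_congr rfl (fun s _ => mp_congr (fun ω => by
      simp [hZ, Prod.ext_iff, and_comm]))
  have hbr : ∀ t, Real.negMulLog (mp p (fun ω => Y ω = t)) ≤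
      ∑ s ∈ Finset.univ.image X, Real.negMulLog (mp p (fun ω => Z ω = (s, t))) := by
    intro t
    rw [hmarg t]
    exact negMulLog_sum_le _ _ (fun s _ => mp_nonneg hp _)
  have hzero : ∀ t ∈ Finset.univ.image Y,
      (∑ s ∈ Finset.univ.image X, Real.negMulLog (mp p (fun ω => Z ω = (s, t))))
        - Real.negMulLog (mp p (fun ω => Y ω = t)) = 0 := by
    apply (Finset.sum_eq_zero_iff_of_nonneg (fun t _ => by linarith [hbr t])).1
    rw [Finset.sum_sub_distrib, ← hZsum, ← Hent_eq_sum_mp Y, heq, sub_self]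
  intro ω₁ ω₂ h₁ h₂ hY
  by_contra hX
  set t := Y ω₁ with ht
  have htm : t ∈ Finset.univ.image Y := mem_image_self Y ω₁
  have hcase := negMulLog_sum_eq_case (Finset.univ.image X)
    (fun s => mp p (fun ω => Z ω = (s, t))) (fun s _ => mp_nonneg hp _)
    (by have := hzero t htm; rw [hmarg t] at *; linarith)
  have hm1 : 0 < mp p (fun ω => Z ω = (X ω₁, t)) := mp_pos hp ω₁ h₁ (by simp [hZ, ht])
  have hm2 : 0 < mp p (fun ω => Z ω = (X ω₂, t)) := mp_pos hp ω₂ h₂ (by simp [hZ, ← hY])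
  have hs1 : X ω₁ ∈ Finset.univ.image X := mem_image_self X ω₁
  have hs2 : X ω₂ ∈ Finset.univ.image X := mem_image_self X ω₂
  have he1 := (hcase _ hs1).resolve_left (by linarith)
  have he2 := (hcase _ hs2).resolve_left (by linarith)
  have hsub : ({X ω₁, X ω₂} : Finset S) ⊆ Finset.univ.image X := by
    intro s hs; rcases Finset.mem_insert.1 hs with h | h
    · rwa [h]
    · rw [Finset.mem_singleton.1 h]; exact hs2
  have hpair : ∑ s ∈ ({X ω₁, X ω₂} : Finset S), mp p (fun ω => Z ω = (s, t))
      = mp p (fun ω => Z ω = (X ω₁, t)) + mp p (fun ω => Z ω = (X ω₂, t)) :=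
    Finset.sum_pair hX
  have hle' := Finset.sum_le_sum_of_subset_of_nonneg hsub
    (fun s _ _ => mp_nonneg hp (fun ω => Z ω = (s, t)))
  rw [hpair] at hle'
  rw [← hmarg t] at he1 he2 hle'
  have : 0 < mp p (fun ω => Y ω = t) := by linarith
  linarith

end Core2

lemma Dterm_ge {q A B Wm : ℝ} (hq : 0 ≤ q) (hqA : q ≤ A) (hqB : q ≤ B)
    (hAW : A ≤ Wm) :
    (q - (if Wm = 0 then 0 else A * B / Wm)
      ≤ q * Real.log q + q * Real.log Wm - q * Real.log A - q * Real.log B)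
    ∧ (q * Real.log q + q * Real.log Wm - q * Real.log A - q * Real.log B
        = q - (if Wm = 0 then 0 else A * B / Wm) → q * Wm = A * B) := by
  set r : ℝ := if Wm = 0 then 0 else A * B / Wm with hr
  rcases hq.lt_or_eq with hqpos | hq0
  · have hApos : 0 < A := lt_of_lt_of_le hqpos hqA
    have hBpos : 0 < B := lt_of_lt_of_le hqpos hqB
    have hWpos : 0 < Wm := lt_of_lt_of_le hApos hAW
    have hWne : Wm ≠ 0 := ne_of_gt hWpos
    have hrval : r = A * B / Wm := by rw [hr, if_neg hWne]
    have hrpos : 0 < r := by rw [hrval]; positivity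
    have hlogeq : q * Real.log q + q * Real.log Wm - q * Real.log A - q * Real.log B
        = q * Real.log (q / r) := by
      rw [hrval, Real.log_div (ne_of_gt hqpos) (by positivity),
        Real.log_div (by positivity) hWne, Real.log_mul (ne_of_gt hApos) (ne_of_gt hBpos)]
      ring
    have hrq : 0 < r / q := by positivity
    have hle : Real.log (r / q) ≤ r / q - 1 := Real.log_le_sub_one_of_pos hrq
    have hlogdiv : Real.log (q / r) = - Real.log (r / q) := by
      rw [← Real.log_inv]; congr 1; field_simp
    constructor
    · rw [hlogeq, hlogdiv]
      have := mul_le_mul_of_nonneg_left hle (le_of_lt hqpos)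
      have hq' : q * (r / q - 1) = r - q := by field_simp
      nlinarith
    · intro heq
      rw [hlogeq, hlogdiv] at heq
      by_cases hqr : q = r
      · rw [hrval] at hqr; field_simp at hqr ⊢; linarith [hqr]
      · have hne1 : r / q ≠ 1 := by
          intro h1
          apply hqr
          field_simp at h1
          linarith
        have hlt : Real.log (r / q) < r / q - 1 := Real.log_lt_sub_one_of_pos hrq hne1
        have := mul_lt_mul_of_pos_left hlt hqpos
        have hq' : q * (r / q - 1) = r - q := by field_simp
        nlinarith
  · subst hq0
    have hA0 : 0 ≤ A := hqA
    have hB0 : 0 ≤ B := hqB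
    have hW0 : 0 ≤ Wm := le_trans hA0 hAW
    have hr0 : 0 ≤ r := by
      rw [hr]; split
      · exact le_refl 0
      · positivity
    constructor
    · simp only [zero_mul, add_zero, sub_zero, zero_sub]
      linarith
    · intro heq
      simp only [zero_mul, add_zero, sub_zero, zero_sub] at heq
      have hrz : r = 0 := by linarith
      rw [hr] at hrz
      by_cases hW : Wm = 0
      · have hA : A = 0 := le_antisymm (hW ▸ hAW) hA0
        rw [hA]; ring
      · rw [if_neg hW] at hrz
        have hAB : A * B = 0 := by
          rcases div_eq_zero_iff.1 hrz with h | h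
          · exact h
          · exact absurd h hW
        rw [hAB]; ring

section Core1
variable {Ω S₁ S₂ S₃ : Type} [Fintype Ω] [DecidableEq S₁] [DecidableEq S₂] [DecidableEq S₃]
  {p : Ω → ℝ}

lemma condIndep (hp : ∀ ω, 0 ≤ p ω) (hs : ∑ ω, p ω = 1)
    (U : Ω → S₁) (V : Ω → S₂) (W : Ω → S₃)
    (heq : Hent p (fun ω => (U ω, W ω)) + Hent p (fun ω => (V ω, W ω))
         = Hent p (fun ω => (U ω, (V ω, W ω))) + Hent p W) :
    ∀ u v w, mp p (fun ω => U ω = u ∧ V ω = v ∧ W ω = w) * mp p (fun ω => W ω = w)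
           = mp p (fun ω => U ω = u ∧ W ω = w) * mp p (fun ω => V ω = v ∧ W ω = w) := by
  classical
  set IU := Finset.univ.image U with hIU
  set IV := Finset.univ.image V with hIV
  set IW := Finset.univ.image W with hIW
  set q : S₁ → S₂ → S₃ → ℝ := fun u v w => mp p (fun ω => U ω = u ∧ V ω = v ∧ W ω = w) with hq
  set Am : S₁ → S₃ → ℝ := fun u w => mp p (fun ω => U ω = u ∧ W ω = w) with hAm
  set Bm : S₂ → S₃ → ℝ := fun v w => mp p (fun ω => V ω = v ∧ W ω = w) with hBm
  set Wm : S₃ → ℝ := fun w => mp p (fun ω => W ω = w) with hWm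
  -- marginals
  have marg_v : ∀ u w, ∑ v ∈ IV, q u v w = Am u w := by
    intro u w
    show (∑ v ∈ IV, mp p fun ω => U ω = u ∧ V ω = v ∧ W ω = w)
      = mp p fun ω => U ω = u ∧ W ω = w
    rw [← mp_marg (fun ω => U ω = u ∧ W ω = w) V IV (fun ω => mem_image_self V ω)]
    exact Finset.sum_congr rfl (fun v _ => mp_congr (fun ω => by tauto))
  have marg_u : ∀ v w, ∑ u ∈ IU, q u v w = Bm v w := by
    intro v w
    show (∑ u ∈ IU, mp p fun ω => U ω = u ∧ V ω = v ∧ W ω = w)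
      = mp p fun ω => V ω = v ∧ W ω = w
    rw [← mp_marg (fun ω => V ω = v ∧ W ω = w) U IU (fun ω => mem_image_self U ω)]
    exact Finset.sum_congr rfl (fun u _ => mp_congr (fun ω => by tauto))
  have marg_A : ∀ w, ∑ u ∈ IU, Am u w = Wm w := by
    intro w
    show (∑ u ∈ IU, mp p fun ω => U ω = u ∧ W ω = w) = mp p fun ω => W ω = w
    rw [← mp_marg (fun ω => W ω = w) U IU (fun ω => mem_image_self U ω)]
    exact Finset.sum_congr rfl (fun u _ => mp_congr (fun ω => by tauto))
  have marg_B : ∀ w, ∑ v ∈ IV, Bm v w = Wm w := by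
    intro w
    show (∑ v ∈ IV, mp p fun ω => V ω = v ∧ W ω = w) = mp p fun ω => W ω = w
    rw [← mp_marg (fun ω => W ω = w) V IV (fun ω => mem_image_self V ω)]
    exact Finset.sum_congr rfl (fun v _ => mp_congr (fun ω => by tauto))
  have sum_W : ∑ w ∈ IW, Wm w = 1 := by
    show (∑ w ∈ IW, mp p fun ω => W ω = w) = 1
    rw [← mp_true hs (p := p)]
    rw [← mp_marg (fun _ => True) W IW (fun ω => mem_image_self W ω)]
    exact Finset.sum_congr rfl (fun w _ => mp_congr (fun ω => by tauto))
  -- entropies as sums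
  have eHW : Hent p W = ∑ w ∈ IW, Real.negMulLog (Wm w) :=
    Hent_eq_sum_superset W IW (by rw [hIW])
  have eHUW : Hent p (fun ω => (U ω, W ω)) = ∑ u ∈ IU, ∑ w ∈ IW, Real.negMulLog (Am u w) := by
    rw [Hent_eq_sum_superset (fun ω => (U ω, W ω)) (IU ×ˢ IW)
      (by intro z hz; obtain ⟨ω, _, hω⟩ := Finset.mem_image.1 hz; rw [← hω];
          exact Finset.mem_product.2 ⟨mem_image_self U ω, mem_image_self W ω⟩),
      Finset.sum_product]
    exact Finset.sum_congr rfl (fun u _ => Finset.sum_congr rfl (fun w _ => by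
      congr 1
      exact mp_congr (fun ω => by simp [Prod.ext_iff])))
  have eHVW : Hent p (fun ω => (V ω, W ω)) = ∑ v ∈ IV, ∑ w ∈ IW, Real.negMulLog (Bm v w) := by
    rw [Hent_eq_sum_superset (fun ω => (V ω, W ω)) (IV ×ˢ IW)
      (by intro z hz; obtain ⟨ω, _, hω⟩ := Finset.mem_image.1 hz; rw [← hω];
          exact Finset.mem_product.2 ⟨mem_image_self V ω, mem_image_self W ω⟩),
      Finset.sum_product]
    exact Finset.sum_congr rfl (fun v _ => Finset.sum_congr rfl (fun w _ => by
      congr 1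
      exact mp_congr (fun ω => by simp [Prod.ext_iff])))
  have eHUVW : Hent p (fun ω => (U ω, (V ω, W ω)))
      = ∑ u ∈ IU, ∑ v ∈ IV, ∑ w ∈ IW, Real.negMulLog (q u v w) := by
    rw [Hent_eq_sum_superset (fun ω => (U ω, (V ω, W ω))) (IU ×ˢ (IV ×ˢ IW))
      (by intro z hz; obtain ⟨ω, _, hω⟩ := Finset.mem_image.1 hz; rw [← hω];
          exact Finset.mem_product.2 ⟨mem_image_self U ω,
            Finset.mem_product.2 ⟨mem_image_self V ω, mem_image_self W ω⟩⟩),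
      Finset.sum_product]
    refine Finset.sum_congr rfl (fun u _ => ?_)
    rw [Finset.sum_product]
    exact Finset.sum_congr rfl (fun v _ => Finset.sum_congr rfl (fun w _ => by
      congr 1
      exact mp_congr (fun ω => by simp [Prod.ext_iff])))
  -- basic bounds
  have hq0 : ∀ u v w, 0 ≤ q u v w := fun u v w => mp_nonneg hp _
  have hqA : ∀ u v w, q u v w ≤ Am u w := fun u v w =>
    mp_mono hp (fun ω h => ⟨h.1, h.2.2⟩)
  have hqB : ∀ u v w, q u v w ≤ Bm v w := fun u v w =>
    mp_mono hp (fun ω h => ⟨h.2.1, h.2.2⟩)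
  have hAW : ∀ u w, Am u w ≤ Wm w := fun u w => mp_mono hp (fun ω h => h.2)
  -- r
  set r : S₁ → S₂ → S₃ → ℝ :=
    fun u v w => if Wm w = 0 then 0 else Am u w * Bm v w / Wm w with hr
  have sum_q : ∑ u ∈ IU, ∑ v ∈ IV, ∑ w ∈ IW, q u v w = 1 := by
    calc ∑ u ∈ IU, ∑ v ∈ IV, ∑ w ∈ IW, q u v w
        = ∑ u ∈ IU, ∑ w ∈ IW, ∑ v ∈ IV, q u v w :=
          Finset.sum_congr rfl (fun u _ => Finset.sum_comm)
      _ = ∑ u ∈ IU, ∑ w ∈ IW, Am u w :=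
          Finset.sum_congr rfl (fun u _ => Finset.sum_congr rfl (fun w _ => marg_v u w))
      _ = ∑ w ∈ IW, ∑ u ∈ IU, Am u w := Finset.sum_comm
      _ = ∑ w ∈ IW, Wm w := Finset.sum_congr rfl (fun w _ => marg_A w)
      _ = 1 := sum_W
  have sum_r : ∑ u ∈ IU, ∑ v ∈ IV, ∑ w ∈ IW, r u v w = 1 := by
    calc ∑ u ∈ IU, ∑ v ∈ IV, ∑ w ∈ IW, r u v w
        = ∑ u ∈ IU, ∑ w ∈ IW, ∑ v ∈ IV, r u v w :=
          Finset.sum_congr rfl (fun u _ => Finset.sum_comm)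
      _ = ∑ w ∈ IW, ∑ u ∈ IU, ∑ v ∈ IV, r u v w := Finset.sum_comm
      _ = ∑ w ∈ IW, Wm w := by
          apply Finset.sum_congr rfl
          intro w _
          by_cases hW : Wm w = 0
          · simp [hr, hW]
          · have : ∀ u, ∑ v ∈ IV, r u v w = Am u w * Wm w / Wm w := by
              intro u
              rw [hr]
              simp only [if_neg hW]
              rw [← Finset.sum_div, ← Finset.mul_sum, marg_B w]
            rw [Finset.sum_congr rfl (fun u _ => this u)]
            have : ∀ u, Am u w * Wm w / Wm w = Am u w := fun u => by
              rw [mul_div_assoc, div_self hW, mul_one]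
            rw [Finset.sum_congr rfl (fun u _ => this u), marg_A w]
      _ = 1 := sum_W
  -- transformations of entropies into triple sums
  have T1 : ∑ u ∈ IU, ∑ w ∈ IW, Real.negMulLog (Am u w)
      = ∑ u ∈ IU, ∑ v ∈ IV, ∑ w ∈ IW, (-(q u v w * Real.log (Am u w))) := by
    apply Finset.sum_congr rfl
    intro u _
    calc ∑ w ∈ IW, Real.negMulLog (Am u w)
        = ∑ w ∈ IW, ∑ v ∈ IV, (-(q u v w * Real.log (Am u w))) := by
          apply Finset.sum_congr rfl
          intro w _
          rw [Real.negMulLog, neg_mul, ← marg_v u w, Finset.sum_mul,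
            ← Finset.sum_neg_distrib]
      _ = ∑ v ∈ IV, ∑ w ∈ IW, (-(q u v w * Real.log (Am u w))) := Finset.sum_comm
  have T2 : ∑ v ∈ IV, ∑ w ∈ IW, Real.negMulLog (Bm v w)
      = ∑ u ∈ IU, ∑ v ∈ IV, ∑ w ∈ IW, (-(q u v w * Real.log (Bm v w))) := by
    calc ∑ v ∈ IV, ∑ w ∈ IW, Real.negMulLog (Bm v w)
        = ∑ v ∈ IV, ∑ w ∈ IW, ∑ u ∈ IU, (-(q u v w * Real.log (Bm v w))) := by
          apply Finset.sum_congr rfl; intro v _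
          apply Finset.sum_congr rfl; intro w _
          rw [Real.negMulLog, neg_mul, ← marg_u v w, Finset.sum_mul,
            ← Finset.sum_neg_distrib]
      _ = ∑ v ∈ IV, ∑ u ∈ IU, ∑ w ∈ IW, (-(q u v w * Real.log (Bm v w))) :=
          Finset.sum_congr rfl (fun v _ => Finset.sum_comm)
      _ = ∑ u ∈ IU, ∑ v ∈ IV, ∑ w ∈ IW, (-(q u v w * Real.log (Bm v w))) :=
          Finset.sum_comm
  have T3 : ∑ w ∈ IW, Real.negMulLog (Wm w)
      = ∑ u ∈ IU, ∑ v ∈ IV, ∑ w ∈ IW, (-(q u v w * Real.log (Wm w))) := by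
    calc ∑ w ∈ IW, Real.negMulLog (Wm w)
        = ∑ w ∈ IW, ∑ u ∈ IU, ∑ v ∈ IV, (-(q u v w * Real.log (Wm w))) := by
          apply Finset.sum_congr rfl; intro w _
          rw [Real.negMulLog, neg_mul, ← marg_A w, Finset.sum_mul,
            ← Finset.sum_neg_distrib]
          apply Finset.sum_congr rfl; intro u _
          rw [← marg_v u w, Finset.sum_mul, ← Finset.sum_neg_distrib]
      _ = ∑ u ∈ IU, ∑ w ∈ IW, ∑ v ∈ IV, (-(q u v w * Real.log (Wm w))) :=
          Finset.sum_comm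
      _ = ∑ u ∈ IU, ∑ v ∈ IV, ∑ w ∈ IW, (-(q u v w * Real.log (Wm w))) :=
          Finset.sum_congr rfl (fun u _ => Finset.sum_comm)
  have T4 : ∑ u ∈ IU, ∑ v ∈ IV, ∑ w ∈ IW, Real.negMulLog (q u v w)
      = ∑ u ∈ IU, ∑ v ∈ IV, ∑ w ∈ IW, (-(q u v w * Real.log (q u v w))) := by
    apply Finset.sum_congr rfl; intro u _
    apply Finset.sum_congr rfl; intro v _
    apply Finset.sum_congr rfl; intro w _
    rw [Real.negMulLog, neg_mul]
  -- the key vanishing sum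
  have key : ∑ u ∈ IU, ∑ v ∈ IV, ∑ w ∈ IW,
      (q u v w * Real.log (q u v w) + q u v w * Real.log (Wm w)
        - q u v w * Real.log (Am u w) - q u v w * Real.log (Bm v w)
        - (q u v w - r u v w)) = 0 := by
    have hcomb : ∑ u ∈ IU, ∑ v ∈ IV, ∑ w ∈ IW,
        (q u v w * Real.log (q u v w) + q u v w * Real.log (Wm w)
          - q u v w * Real.log (Am u w) - q u v w * Real.log (Bm v w)
          - (q u v w - r u v w))
        = ((∑ u ∈ IU, ∑ v ∈ IV, ∑ w ∈ IW, (-(q u v w * Real.log (Am u w))))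
          + (∑ u ∈ IU, ∑ v ∈ IV, ∑ w ∈ IW, (-(q u v w * Real.log (Bm v w))))
          - (∑ u ∈ IU, ∑ v ∈ IV, ∑ w ∈ IW, (-(q u v w * Real.log (q u v w))))
          - (∑ u ∈ IU, ∑ v ∈ IV, ∑ w ∈ IW, (-(q u v w * Real.log (Wm w)))))
          - ((∑ u ∈ IU, ∑ v ∈ IV, ∑ w ∈ IW, q u v w)
            - (∑ u ∈ IU, ∑ v ∈ IV, ∑ w ∈ IW, r u v w)) := by
      simp only [← Finset.sum_add_distrib, ← Finset.sum_sub_distrib]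
      apply Finset.sum_congr rfl; intro u _
      apply Finset.sum_congr rfl; intro v _
      apply Finset.sum_congr rfl; intro w _
      ring
    rw [hcomb, ← T1, ← T2, ← T4, ← T3, sum_q, sum_r, ← eHUW, ← eHVW, ← eHUVW, ← eHW]
    linarith [heq]
  -- pointwise nonnegativity and equality extraction
  have hpt : ∀ u v w, 0 ≤ q u v w * Real.log (q u v w) + q u v w * Real.log (Wm w)
        - q u v w * Real.log (Am u w) - q u v w * Real.log (Bm v w)
        - (q u v w - r u v w) := by
    intro u v w
    have := (Dterm_ge (hq0 u v w) (hqA u v w) (hqB u v w) (hAW u w)).1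
    rw [hr]
    dsimp only
    linarith [this]
  have hzero : ∀ u ∈ IU, ∀ v ∈ IV, ∀ w ∈ IW,
      q u v w * Real.log (q u v w) + q u v w * Real.log (Wm w)
        - q u v w * Real.log (Am u w) - q u v w * Real.log (Bm v w)
        - (q u v w - r u v w) = 0 := by
    intro u hu v hv w hw
    have h1 := (Finset.sum_eq_zero_iff_of_nonneg (fun u _ =>
      Finset.sum_nonneg (fun v _ => Finset.sum_nonneg (fun w _ => hpt u v w)))).1 key u hu
    have h2 := (Finset.sum_eq_zero_iff_of_nonneg (fun v _ =>
      Finset.sum_nonneg (fun w _ => hpt u v w))).1 h1 v hv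
    exact (Finset.sum_eq_zero_iff_of_nonneg (fun w _ => hpt u v w)).1 h2 w hw
  -- conclude
  intro u v w
  by_cases hu : u ∈ IU
  · by_cases hv : v ∈ IV
    · by_cases hw : w ∈ IW
      · have h0 := hzero u hu v hv w hw
        have := (Dterm_ge (hq0 u v w) (hqA u v w) (hqB u v w) (hAW u w)).2 (by
          rw [hr] at h0
          dsimp only at h0
          linarith [h0])
        exact this
      · have hq' : q u v w = 0 := mp_eq_zero' (fun ω h =>
          hw (by rw [hIW, ← h.2.2]; exact mem_image_self W ω))
        have hA' : Am u w = 0 := mp_eq_zero' (fun ω h =>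
          hw (by rw [hIW, ← h.2]; exact mem_image_self W ω))
        show q u v w * Wm w = Am u w * Bm v w
        rw [hq', hA', zero_mul, zero_mul]
    · have hq' : q u v w = 0 := mp_eq_zero' (fun ω h =>
        hv (by rw [hIV, ← h.2.1]; exact mem_image_self V ω))
      have hB' : Bm v w = 0 := mp_eq_zero' (fun ω h =>
        hv (by rw [hIV, ← h.1]; exact mem_image_self V ω))
      show q u v w * Wm w = Am u w * Bm v w
      rw [hq', hB', zero_mul, mul_zero]
  · have hq' : q u v w = 0 := mp_eq_zero' (fun ω h =>
      hu (by rw [hIU, ← h.1]; exact mem_image_self U ω))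
    have hA' : Am u w = 0 := mp_eq_zero' (fun ω h =>
      hu (by rw [hIU, ← h.1]; exact mem_image_self U ω))
    show q u v w * Wm w = Am u w * Bm v w
    rw [hq', hA', zero_mul, zero_mul]
end Core1

lemma joint_eq_iff {Ω : Type} {n : ℕ} (X : Fin n → Ω → ℕ) (A : Finset (Fin n)) (ω₁ ω₂ : Ω) :
    joint X A ω₁ = joint X A ω₂ ↔ ∀ l ∈ A, X l ω₁ = X l ω₂ := by
  constructor
  · intro h l hl
    exact congrFun h ⟨l, hl⟩
  · intro h
    funext l
    exact h l.1 l.2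

lemma rUone_insert_of_not_mem {n n' : ℕ} {e : Fin n} (he : e ∉ alphaSet n n')
    (S : Finset (Fin n)) : rUone n n' (insert e S) = rUone n n' S := by
  unfold rUone
  rw [Finset.insert_inter_of_notMem he]

lemma rUone_of_mem {n n' : ℕ} {e : Fin n} {S : Finset (Fin n)} (heS : e ∈ S)
    (heα : e ∈ alphaSet n n') : rUone n n' S = 1 := by
  unfold rUone
  rw [if_pos ⟨e, Finset.mem_inter.2 ⟨heS, heα⟩⟩]

lemma rUone_singleton_zero {n n' : ℕ} {e : Fin n} (he : e ∉ alphaSet n n') :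
    rUone n n' {e} = 0 := by
  unfold rUone
  rw [if_neg]
  intro ⟨x, hx⟩
  rw [Finset.mem_inter, Finset.mem_singleton] at hx
  exact he (hx.1 ▸ hx.2)

lemma rUone_of_inter {n n' : ℕ} {S : Finset (Fin n)} (h : (S ∩ alphaSet n n').Nonempty) :
    rUone n n' S = 1 := if_pos h


set_option maxHeartbeats 4000000 in
/-- for `M` of rank `≥ 2` spanning an extreme ray of `Γ_n` with a circuit
`C`, `|C| ≥ 3`, `1 ≤ |C ∩ α| ≤ |C| - 1` (where `α = {1,…,n'}`), and not
(`|C| = 3` and `|C ∩ α| = 2`), if `a·r_M + b·r_{U_{1,α}}` is entropic with `a, b > 0`,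
then `a = log v` for some integer `v ≥ 2`. -/
theorem stmt18 (n n' : ℕ) (hn'1 : 1 ≤ n') (hn'n : n' ≤ n)
    (M : MatroidRk n) (hrk : 2 ≤ M.r Finset.univ) (hext : SpansExtremeRay M.rr)
    (C : Finset (Fin n)) (hC : M.IsCircuit C) (hC3 : 3 ≤ C.card)
    (h1 : 1 ≤ (C ∩ alphaSet n n').card) (h2 : (C ∩ alphaSet n n').card ≤ C.card - 1)
    (hnot : ¬ (C.card = 3 ∧ (C ∩ alphaSet n n').card = 2))
    (a b : ℝ) (ha : 0 < a) (hb : 0 < b)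
    (hent : IsEntropic (fun A => a * M.rr A + b * rUone n n' A)) :
    ∃ v : ℤ, 2 ≤ v ∧ a = Real.log (v : ℝ) := by
  classical
  obtain ⟨N, p, X, hp, hs, hE⟩ := hent
  simp only at hE
  -- nonempty sample space
  have hNpos : 0 < N := by
    by_contra h
    push_neg at h
    interval_cases N
    simp at hs
  have : Nonempty (Fin N) := ⟨⟨0, hNpos⟩⟩
  obtain ⟨ω₀, hω₀⟩ : ∃ ω, 0 < p ω := by
    by_contra h
    push_neg at h
    have : ∑ ω, p ω = 0 :=
      Finset.sum_eq_zero (fun ω _ => le_antisymm (h ω) (hp ω))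
    rw [this] at hs
    norm_num at hs
  set α := alphaSet n n' with hα
  -- rank facts
  have hind : ∀ S, S ⊂ C → M.r S = S.card := fun S h => hC.2 S h
  have hCne : C.Nonempty := Finset.card_pos.1 (by omega)
  have hrC : M.r C = C.card - 1 := by
    obtain ⟨e, he⟩ := hCne
    have hrCe : M.r (C.erase e) = C.card - 1 := by
      rw [hind _ (Finset.erase_ssubset he), Finset.card_erase_of_mem he]
    have hle := M.le_card C
    have hne : M.r C ≠ C.card := hC.1
    have hge : C.card - 1 ≤ M.r C := hrCe ▸ M.mono (Finset.erase_subset e C)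
    omega
  -- pick k ∈ C ∩ α
  obtain ⟨k, hk⟩ : (C ∩ α).Nonempty := Finset.card_pos.1 (by omega)
  have hkC : k ∈ C := (Finset.mem_inter.1 hk).1
  have hkα : k ∈ α := (Finset.mem_inter.1 hk).2
  -- pick i ∈ C \ α
  have hCdiff : C \ α = C \ (C ∩ α) := by
    ext x; simp only [Finset.mem_sdiff, Finset.mem_inter]; tauto
  have hcardCα : (C ∩ α).card ≤ C.card := Finset.card_le_card Finset.inter_subset_left
  have hcards : (C \ α).card = C.card - (C ∩ α).card := by
    rw [hCdiff, Finset.card_sdiff_of_subset Finset.inter_subset_left]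
  obtain ⟨i, hi⟩ : (C \ α).Nonempty := Finset.card_pos.1 (by omega)
  have hiC : i ∈ C := (Finset.mem_sdiff.1 hi).1
  have hiα : i ∉ α := (Finset.mem_sdiff.1 hi).2
  have hik : i ≠ k := fun h => hiα (h ▸ hkα)
  -- pick j
  have hjsel : ∃ j, j ∈ C ∧ j ≠ i ∧ j ≠ k ∧
      (j ∉ α ∨ ((C \ ({i, j, k} : Finset (Fin n))) ∩ α).Nonempty) := by
    by_cases hcase : ((C \ α).erase i).Nonempty
    · obtain ⟨j, hj⟩ := hcase
      have hji : j ≠ i := (Finset.mem_erase.1 hj).1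
      have hjCα := (Finset.mem_erase.1 hj).2
      have hjC : j ∈ C := (Finset.mem_sdiff.1 hjCα).1
      have hjα : j ∉ α := (Finset.mem_sdiff.1 hjCα).2
      exact ⟨j, hjC, hji, fun h => hjα (h ▸ hkα), Or.inl hjα⟩
    · have hsing : C \ α = {i} := by
        apply Finset.eq_singleton_iff_unique_mem.2
        refine ⟨hi, fun x hx => ?_⟩
        by_contra hxi
        exact hcase ⟨x, Finset.mem_erase.2 ⟨hxi, hx⟩⟩
      have hcard1 : (C ∩ α).card = C.card - 1 := by
        have : (C \ α).card = 1 := by rw [hsing]; simp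
        omega
      have hC4 : 4 ≤ C.card := by
        have : C.card ≠ 3 := fun h => hnot ⟨h, by omega⟩
        omega
      obtain ⟨j, hj⟩ : ((C ∩ α).erase k).Nonempty := by
        apply Finset.card_pos.1
        rw [Finset.card_erase_of_mem hk]
        omega
      have hjk : j ≠ k := (Finset.mem_erase.1 hj).1
      have hjCα := (Finset.mem_erase.1 hj).2
      have hjC : j ∈ C := (Finset.mem_inter.1 hjCα).1
      have hjα : j ∈ α := (Finset.mem_inter.1 hjCα).2
      have hji : j ≠ i := fun h => hiα (h ▸ hjα)
      refine ⟨j, hjC, hji, hjk, Or.inr ?_⟩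
      have hss : ((C ∩ α).erase k).erase j ⊆ (C \ ({i, j, k} : Finset (Fin n))) ∩ α := by
        intro x hx
        have hxj : x ≠ j := (Finset.mem_erase.1 hx).1
        have hxk : x ≠ k := (Finset.mem_erase.1 (Finset.mem_erase.1 hx).2).1
        have hxCα := (Finset.mem_erase.1 (Finset.mem_erase.1 hx).2).2
        have hxC : x ∈ C := (Finset.mem_inter.1 hxCα).1
        have hxα : x ∈ α := (Finset.mem_inter.1 hxCα).2
        have hxi : x ≠ i := fun h => hiα (h ▸ hxα)
        refine Finset.mem_inter.2 ⟨Finset.mem_sdiff.2 ⟨hxC, ?_⟩, hxα⟩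
        simp only [Finset.mem_insert, Finset.mem_singleton]
        tauto
      apply Finset.Nonempty.mono hss
      apply Finset.card_pos.1
      rw [Finset.card_erase_of_mem (Finset.mem_erase.2 ⟨hjk, hjCα⟩),
        Finset.card_erase_of_mem hk]
      omega
  obtain ⟨j, hjC, hji, hjk, hjcase⟩ := hjsel
  -- the set D
  set D := C \ ({i, j, k} : Finset (Fin n)) with hD
  have hiD : i ∉ D := by simp [hD]
  have hjD : j ∉ D := by simp [hD]
  have hkD : k ∉ D := by simp [hD]
  have hDC : D ⊆ C := Finset.sdiff_subset
  have hCdec : C = insert i (insert j (insert k D)) := by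
    ext x
    simp only [hD, Finset.mem_insert, Finset.mem_sdiff, Finset.mem_singleton]
    constructor
    · intro hx
      by_cases hx1 : x = i
      · exact Or.inl hx1
      by_cases hx2 : x = j
      · exact Or.inr (Or.inl hx2)
      by_cases hx3 : x = k
      · exact Or.inr (Or.inr (Or.inl hx3))
      exact Or.inr (Or.inr (Or.inr ⟨hx, fun hc => by
        rcases hc with h | h | h <;> contradiction⟩))
    · intro hx
      rcases hx with h | h | h | h
      · rw [h]; exact hiC
      · rw [h]; exact hjC
      · rw [h]; exact hkC
      · exact h.1
  -- memberships for inserts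
  have hij : i ≠ j := fun h => hji h.symm
  have hkj : k ≠ j := fun h => hjk h.symm
  have hki : k ≠ i := fun h => hik h.symm
  have hj_kD : j ∉ insert k D := by simp [hjk, hjD]
  have hi_kD : i ∉ insert k D := by simp [hik, hiD]
  have hi_jD : i ∉ insert j D := by simp [hij, hiD]
  have hk_jD : k ∉ insert j D := by simp [hkj, hkD]
  have hi_jkD : i ∉ insert j (insert k D) := by simp [hij, hik, hiD]
  -- cards
  have hcC : C.card = D.card + 3 := by
    rw [hCdec, Finset.card_insert_of_notMem hi_jkD, Finset.card_insert_of_notMem hj_kD,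
      Finset.card_insert_of_notMem hkD]
  -- proper subsets of C and their ranks (real versions)
  have hproper : ∀ S : Finset (Fin n), S ⊆ C → (∃ x ∈ C, x ∉ S) → M.rr S = (S.card : ℝ) := by
    intro S hsub ⟨x, hxC, hxS⟩
    unfold MatroidRk.rr
    rw [hind S (Finset.ssubset_iff_of_subset hsub |>.2 ⟨x, hxC, hxS⟩)]
  have hsub_iD : insert i D ⊆ C := Finset.insert_subset hiC hDC
  have hsub_jD : insert j D ⊆ C := Finset.insert_subset hjC hDC
  have hsub_kD : insert k D ⊆ C := Finset.insert_subset hkC hDC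
  have hsub_ikD : insert i (insert k D) ⊆ C := Finset.insert_subset hiC hsub_kD
  have hsub_jkD : insert j (insert k D) ⊆ C := Finset.insert_subset hjC hsub_kD
  have hsub_ijD : insert i (insert j D) ⊆ C := Finset.insert_subset hiC hsub_jD
  set dd := (D.card : ℝ) with hdd
  have rrD : M.rr D = dd := hproper D hDC ⟨i, hiC, hiD⟩
  have rr_i : M.rr {i} = 1 := by
    rw [hproper {i} (Finset.singleton_subset_iff.2 hiC)
      ⟨j, hjC, by simp [hji]⟩, Finset.card_singleton, Nat.cast_one]
  have rr_iD : M.rr (insert i D) = dd + 1 := by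
    rw [hproper _ hsub_iD ⟨j, hjC, by simp [hji, hjD]⟩,
      Finset.card_insert_of_notMem hiD]
    push_cast; ring
  have rr_jD : M.rr (insert j D) = dd + 1 := by
    rw [hproper _ hsub_jD ⟨i, hiC, hi_jD⟩, Finset.card_insert_of_notMem hjD]
    push_cast; ring
  have rr_kD : M.rr (insert k D) = dd + 1 := by
    rw [hproper _ hsub_kD ⟨i, hiC, hi_kD⟩, Finset.card_insert_of_notMem hkD]
    push_cast; ring
  have rr_ikD : M.rr (insert i (insert k D)) = dd + 2 := by
    rw [hproper _ hsub_ikD ⟨j, hjC, by simp [hji, hjk, hjD]⟩,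
      Finset.card_insert_of_notMem hi_kD, Finset.card_insert_of_notMem hkD]
    push_cast; ring
  have rr_jkD : M.rr (insert j (insert k D)) = dd + 2 := by
    rw [hproper _ hsub_jkD ⟨i, hiC, hi_jkD⟩,
      Finset.card_insert_of_notMem hj_kD, Finset.card_insert_of_notMem hkD]
    push_cast; ring
  have rr_ijD : M.rr (insert i (insert j D)) = dd + 2 := by
    rw [hproper _ hsub_ijD ⟨k, hkC, by simp [hki, hkj, hkD]⟩,
      Finset.card_insert_of_notMem hi_jD, Finset.card_insert_of_notMem hjD]
    push_cast; ring
  have rrC : M.rr C = dd + 2 := by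
    unfold MatroidRk.rr
    rw [hrC]
    have : C.card - 1 = D.card + 2 := by omega
    rw [this]
    push_cast; ring
  -- rUone values
  set ud := rUone n n' D with hud
  have u_i : rUone n n' {i} = 0 := rUone_singleton_zero hiα
  have u_iD : rUone n n' (insert i D) = ud := rUone_insert_of_not_mem hiα D
  have u_kD : rUone n n' (insert k D) = 1 := rUone_of_mem (Finset.mem_insert_self k D) hkα
  have u_ikD : rUone n n' (insert i (insert k D)) = 1 :=
    rUone_of_mem (Finset.mem_insert_of_mem (Finset.mem_insert_self k D)) hkα
  have u_jkD : rUone n n' (insert j (insert k D)) = 1 :=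
    rUone_of_mem (Finset.mem_insert_of_mem (Finset.mem_insert_self k D)) hkα
  have u_jD : rUone n n' (insert j D) = ud := by
    rcases hjcase with hjα | hinter
    · exact rUone_insert_of_not_mem hjα D
    · rw [hud, rUone_of_inter hinter, rUone_of_inter]
      exact Finset.Nonempty.mono
        (Finset.inter_subset_inter (Finset.subset_insert j D) (le_refl α)) hinter
  have u_ijD : rUone n n' (insert i (insert j D)) = ud := by
    rw [rUone_insert_of_not_mem hiα, u_jD]
  have uC : rUone n n' C = 1 := rUone_of_mem hkC hkα

  -- random variables
  set F : Fin N → ℕ := fun ω => X i ω with hF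
  set G : Fin N → ℕ := fun ω => X j ω with hG
  set K : Fin N → ℕ := fun ω => X k ω with hK
  set Dm : Fin N → (D → ℕ) := joint X D with hDm
  have hDmH : Hent p Dm = Hent p (joint X D) := rfl
  -- transports
  have tF : Hent p (joint X ({i} : Finset (Fin n))) = Hent p F :=
    Hent_congr _ _ (fun ω₁ ω₂ => by simp [joint_eq_iff, hF])
  have tFD : Hent p (joint X (insert i D)) = Hent p (fun ω => (F ω, Dm ω)) :=
    Hent_congr _ _ (fun ω₁ ω₂ => by
      simp [joint_eq_iff, Finset.forall_mem_insert, Prod.mk.injEq, hF, hDm])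
  have tKD : Hent p (joint X (insert k D)) = Hent p (fun ω => (K ω, Dm ω)) :=
    Hent_congr _ _ (fun ω₁ ω₂ => by
      simp [joint_eq_iff, Finset.forall_mem_insert, Prod.mk.injEq, hK, hDm])
  have tGD : Hent p (joint X (insert j D)) = Hent p (fun ω => (G ω, Dm ω)) :=
    Hent_congr _ _ (fun ω₁ ω₂ => by
      simp [joint_eq_iff, Finset.forall_mem_insert, Prod.mk.injEq, hG, hDm])
  have tFKD : Hent p (joint X (insert i (insert k D)))
      = Hent p (fun ω => (F ω, (K ω, Dm ω))) :=
    Hent_congr _ _ (fun ω₁ ω₂ => by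
      simp [joint_eq_iff, Finset.forall_mem_insert, Prod.mk.injEq, hF, hK, hDm])
  have tGKD : Hent p (joint X (insert j (insert k D)))
      = Hent p (fun ω => (G ω, (K ω, Dm ω))) :=
    Hent_congr _ _ (fun ω₁ ω₂ => by
      simp [joint_eq_iff, Finset.forall_mem_insert, Prod.mk.injEq, hG, hK, hDm])
  have tFGD : Hent p (joint X (insert i (insert j D)))
      = Hent p (fun ω => (F ω, (G ω, Dm ω))) :=
    Hent_congr _ _ (fun ω₁ ω₂ => by
      simp [joint_eq_iff, Finset.forall_mem_insert, Prod.mk.injEq, hF, hG, hDm])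
  have tCG : Hent p (joint X C) = Hent p (fun ω => (G ω, (F ω, (K ω, Dm ω)))) := by
    rw [hCdec]
    exact Hent_congr _ _ (fun ω₁ ω₂ => by
      simp only [joint_eq_iff, Finset.forall_mem_insert, Prod.mk.injEq, hF, hG, hK, hDm]
      all_goals tauto)
  have tCF : Hent p (joint X C) = Hent p (fun ω => (F ω, (G ω, (K ω, Dm ω)))) := by
    rw [hCdec]
    exact Hent_congr _ _ (fun ω₁ ω₂ => by
      simp only [joint_eq_iff, Finset.forall_mem_insert, Prod.mk.injEq, hF, hG, hK, hDm]
      all_goals tauto)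
  -- entropy identities
  have jE1 : Hent p (joint X (insert i D)) = Hent p (joint X {i}) + Hent p (joint X D) := by
    rw [← hE (insert i D), ← hE {i}, ← hE D, rr_iD, rrD, rr_i, u_iD, u_i]
    ring
  have jE2 : Hent p (joint X (insert i (insert k D))) + Hent p (joint X D)
      = Hent p (joint X (insert i D)) + Hent p (joint X (insert k D)) := by
    rw [← hE (insert i (insert k D)), ← hE (insert i D), ← hE (insert k D), ← hE D,
      rr_ikD, rr_iD, rr_kD, rrD, u_ikD, u_iD, u_kD]
    ring
  have jE3 : Hent p (joint X (insert j (insert k D))) + Hent p (joint X D)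
      = Hent p (joint X (insert j D)) + Hent p (joint X (insert k D)) := by
    rw [← hE (insert j (insert k D)), ← hE (insert j D), ← hE (insert k D), ← hE D,
      rr_jkD, rr_jD, rr_kD, rrD, u_jkD, u_jD, u_kD]
    ring
  have jE4 : Hent p (joint X (insert i (insert j D))) + Hent p (joint X D)
      = Hent p (joint X (insert i D)) + Hent p (joint X (insert j D)) := by
    rw [← hE (insert i (insert j D)), ← hE (insert i D), ← hE (insert j D), ← hE D,
      rr_ijD, rr_iD, rr_jD, rrD, u_ijD, u_iD, u_jD]
    ring
  have jE5 : Hent p (joint X C) = Hent p (joint X (insert i (insert k D))) := by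
    rw [← hE C, ← hE (insert i (insert k D)), rrC, rr_ikD, uC, u_ikD]
  have jE6 : Hent p (joint X C) = Hent p (joint X (insert j (insert k D))) := by
    rw [← hE C, ← hE (insert j (insert k D)), rrC, rr_jkD, uC, u_jkD]
  -- a = Hent p F
  have hentF : a = Hent p F := by
    have h := hE {i}
    rw [rr_i, u_i] at h
    rw [← tF, ← h]
    ring
  -- unconditional independence of F and Dm
  have hHconst : Hent p (fun _ : Fin N => (0 : ℕ)) = 0 := Hent_const hs 0
  have tF0 : Hent p (fun ω => (F ω, (fun _ : Fin N => (0 : ℕ)) ω)) = Hent p F :=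
    Hent_congr _ _ (fun ω₁ ω₂ => by simp)
  have tDm0 : Hent p (fun ω => (Dm ω, (fun _ : Fin N => (0 : ℕ)) ω)) = Hent p Dm :=
    Hent_congr _ _ (fun ω₁ ω₂ => by simp)
  have tFDm0 : Hent p (joint X (insert i D))
      = Hent p (fun ω => (F ω, (Dm ω, (fun _ : Fin N => (0 : ℕ)) ω))) :=
    Hent_congr _ _ (fun ω₁ ω₂ => by
      simp [joint_eq_iff, Finset.forall_mem_insert, Prod.mk.injEq, hF, hDm])
  have CI1 := condIndep hp hs F Dm (fun _ : Fin N => (0 : ℕ))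
    (by linarith [jE1, tF, tF0, tDm0, tFDm0, hHconst, hDmH])
  have ind1 : ∀ x dv, mp p (fun ω => F ω = x ∧ Dm ω = dv)
      = mp p (fun ω => F ω = x) * mp p (fun ω => Dm ω = dv) := by
    intro x dv
    have h := CI1 x dv 0
    have e1 : mp p (fun ω => F ω = x ∧ Dm ω = dv ∧ (fun _ : Fin N => (0:ℕ)) ω = 0)
        = mp p (fun ω => F ω = x ∧ Dm ω = dv) := mp_congr (fun ω => by simp)
    have e2 : mp p (fun ω => (fun _ : Fin N => (0:ℕ)) ω = 0) = 1 := by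
      rw [mp_congr (Q := fun _ => True) (fun ω => by simp), mp_true hs]
    have e3 : mp p (fun ω => F ω = x ∧ (fun _ : Fin N => (0:ℕ)) ω = 0)
        = mp p (fun ω => F ω = x) := mp_congr (fun ω => by simp)
    have e4 : mp p (fun ω => Dm ω = dv ∧ (fun _ : Fin N => (0:ℕ)) ω = 0)
        = mp p (fun ω => Dm ω = dv) := mp_congr (fun ω => by simp)
    rw [e1, e2, e3, e4, mul_one] at h
    exact h
  -- conditional independences
  have CI2 := condIndep hp hs F K Dm (by linarith [jE2, tFD, tKD, tFKD, hDmH])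
  have CI3 := condIndep hp hs G K Dm (by linarith [jE3, tGD, tKD, tGKD, hDmH])
  have CI4 := condIndep hp hs F G Dm (by linarith [jE4, tFD, tGD, tFGD, hDmH])
  have DETJ := determin hp G (fun ω => (F ω, (K ω, Dm ω))) (by
    have : Hent p (fun ω => (G ω, (F ω, (K ω, Dm ω)))) = Hent p (joint X C) := tCG.symm
    linarith [tCG, jE5, tFKD])
  have DETI := determin hp F (fun ω => (G ω, (K ω, Dm ω))) (by
    linarith [tCF, jE6, tGKD])

  -- ===================== endgame =====================
  set d : D → ℕ := Dm ω₀ with hd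
  set y : ℕ := K ω₀ with hy
  have hmDpos : 0 < mp p (fun ω => Dm ω = d) := mp_pos hp ω₀ hω₀ rfl
  have hmKDy : 0 < mp p (fun ω => K ω = y ∧ Dm ω = d) := mp_pos hp ω₀ hω₀ ⟨rfl, rfl⟩
  -- positivity of triple masses
  have posFKD : ∀ x y', 0 < mp p (fun ω => F ω = x) →
      0 < mp p (fun ω => K ω = y' ∧ Dm ω = d) →
      0 < mp p (fun ω => F ω = x ∧ K ω = y' ∧ Dm ω = d) := by
    intro x y' hx hy'
    have h2 := CI2 x y' d
    rw [ind1 x d] at h2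
    rcases (mp_nonneg hp (fun ω => F ω = x ∧ K ω = y' ∧ Dm ω = d)).lt_or_eq with h | h
    · exact h
    · exfalso
      rw [← h, zero_mul] at h2
      exact absurd h2.symm (ne_of_gt (mul_pos (mul_pos hx hmDpos) hy'))
  -- witness function
  have hWex : ∀ x y', ∃ ω, 0 < mp p (fun ω => F ω = x) →
      0 < mp p (fun ω => K ω = y' ∧ Dm ω = d) →
      (0 < p ω ∧ F ω = x ∧ K ω = y' ∧ Dm ω = d) := by
    intro x y'
    by_cases hx : 0 < mp p (fun ω => F ω = x)
    · by_cases hy' : 0 < mp p (fun ω => K ω = y' ∧ Dm ω = d)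
      · obtain ⟨ω, hω, hP⟩ := mp_pos_elim hp (posFKD x y' hx hy')
        exact ⟨ω, fun _ _ => ⟨hω, hP⟩⟩
      · exact ⟨ω₀, fun _ h => absurd h hy'⟩
    · exact ⟨ω₀, fun h _ => absurd h hx⟩
  choose Wit hWit using hWex
  set Z : ℕ → ℕ → ℕ := fun x y' => G (Wit x y') with hZ
  -- uniqueness of G given (F,K,Dm)
  have uniqG : ∀ x y', 0 < mp p (fun ω => F ω = x) →
      0 < mp p (fun ω => K ω = y' ∧ Dm ω = d) → ∀ ω, 0 < p ω →
      F ω = x → K ω = y' → Dm ω = d → G ω = Z x y' := by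
    intro x y' hx hy' ω hpω h1 h2 h3
    obtain ⟨hw0, hw1, hw2, hw3⟩ := hWit x y' hx hy'
    exact DETJ ω (Wit x y') hpω hw0 (by
      rw [Prod.mk.injEq, Prod.mk.injEq]
      exact ⟨h1.trans hw1.symm, h2.trans hw2.symm, h3.trans hw3.symm⟩)
  -- uniqueness of F given (G,K,Dm)
  have uniqF : ∀ x y', 0 < mp p (fun ω => F ω = x) →
      0 < mp p (fun ω => K ω = y' ∧ Dm ω = d) → ∀ ω, 0 < p ω →
      G ω = Z x y' → K ω = y' → Dm ω = d → F ω = x := by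
    intro x y' hx hy' ω hpω h1 h2 h3
    obtain ⟨hw0, hw1, hw2, hw3⟩ := hWit x y' hx hy'
    have := DETI ω (Wit x y') hpω hw0 (by
      rw [Prod.mk.injEq, Prod.mk.injEq]
      exact ⟨h1, h2.trans hw2.symm, h3.trans hw3.symm⟩)
    exact this.trans hw1
  -- mass transfer between G-fibers and F-fibers
  have massEq : ∀ x y', 0 < mp p (fun ω => F ω = x) →
      0 < mp p (fun ω => K ω = y' ∧ Dm ω = d) →
      mp p (fun ω => G ω = Z x y' ∧ K ω = y' ∧ Dm ω = d)
        = mp p (fun ω => F ω = x ∧ K ω = y' ∧ Dm ω = d) := by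
    intro x y' hx hy'
    apply mp_congr_pos hp
    intro ω hpω
    constructor
    · intro ⟨ha1, ha2, ha3⟩
      exact ⟨uniqF x y' hx hy' ω hpω ha1 ha2 ha3, ha2, ha3⟩
    · intro ⟨ha1, ha2, ha3⟩
      exact ⟨uniqG x y' hx hy' ω hpω ha1 ha2 ha3, ha2, ha3⟩
  -- value of the G-fiber masses
  have mGD_eq : ∀ x y', 0 < mp p (fun ω => F ω = x) →
      0 < mp p (fun ω => K ω = y' ∧ Dm ω = d) →
      mp p (fun ω => G ω = Z x y' ∧ Dm ω = d)
        = mp p (fun ω => F ω = x) * mp p (fun ω => Dm ω = d) := by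
    intro x y' hx hy'
    have h3 := CI3 (Z x y') y' d
    rw [massEq x y' hx hy', CI2 x y' d, ind1 x d] at h3
    exact (mul_right_cancel₀ (ne_of_gt hy') h3).symm
  -- positivity of the image fiber
  have ZGDpos : ∀ x y', 0 < mp p (fun ω => F ω = x) →
      0 < mp p (fun ω => K ω = y' ∧ Dm ω = d) →
      0 < mp p (fun ω => G ω = Z x y' ∧ Dm ω = d) := by
    intro x y' hx hy'
    obtain ⟨hw0, hw1, hw2, hw3⟩ := hWit x y' hx hy'
    exact mp_pos hp (Wit x y') hw0 ⟨rfl, hw3⟩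
  -- injectivity of Z in x
  have injZ : ∀ x x' y', 0 < mp p (fun ω => F ω = x) → 0 < mp p (fun ω => F ω = x') →
      0 < mp p (fun ω => K ω = y' ∧ Dm ω = d) → Z x y' = Z x' y' → x = x' := by
    intro x x' y' hx hx' hy' hzz
    obtain ⟨hw0, hw1, hw2, hw3⟩ := hWit x y' hx hy'
    obtain ⟨hv0, hv1, hv2, hv3⟩ := hWit x' y' hx' hy'
    have := DETI (Wit x y') (Wit x' y') hw0 hv0 (by
      rw [Prod.mk.injEq, Prod.mk.injEq]
      exact ⟨hzz, hw2.trans hv2.symm, hw3.trans hv3.symm⟩)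
    rw [hw1, hv1] at this
    exact this
  -- surjectivity of Z onto the positive G-fibers
  have surjZ : ∀ y' z, 0 < mp p (fun ω => K ω = y' ∧ Dm ω = d) →
      0 < mp p (fun ω => G ω = z ∧ Dm ω = d) →
      ∃ x, 0 < mp p (fun ω => F ω = x) ∧ Z x y' = z := by
    intro y' z hy' hz
    have h3 := CI3 z y' d
    have hpos3 : 0 < mp p (fun ω => G ω = z ∧ K ω = y' ∧ Dm ω = d) := by
      rcases (mp_nonneg hp (fun ω => G ω = z ∧ K ω = y' ∧ Dm ω = d)).lt_or_eq with h | h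
      · exact h
      · exfalso
        rw [← h, zero_mul] at h3
        exact absurd h3.symm (ne_of_gt (mul_pos hz hy'))
    obtain ⟨ω, hω, hG1, hK1, hD1⟩ := mp_pos_elim hp hpos3
    have hxpos : 0 < mp p (fun ω' => F ω' = F ω) := mp_pos hp ω hω rfl
    refine ⟨F ω, hxpos, ?_⟩
    rw [← uniqG (F ω) y' hxpos hy' ω hω rfl hK1 hD1]
    exact hG1
  -- the support of F
  set SF : Finset ℕ := (Finset.univ.image F).filter
    (fun x => 0 < mp p (fun ω => F ω = x)) with hSF
  have hmemSF : ∀ x, 0 < mp p (fun ω => F ω = x) → x ∈ SF := by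
    intro x hx
    obtain ⟨ω, hω, hFx⟩ := mp_pos_elim hp hx
    exact Finset.mem_filter.2 ⟨hFx ▸ mem_image_self F ω, hx⟩
  have hposSF : ∀ x ∈ SF, 0 < mp p (fun ω => F ω = x) :=
    fun x hx => (Finset.mem_filter.1 hx).2
  -- key sum identity (**)
  have keySum : ∀ x z, 0 < mp p (fun ω => F ω = x) →
      mp p (fun ω => G ω = z ∧ Dm ω = d)
        = ∑ y' ∈ Finset.univ.image K,
            (if 0 < mp p (fun ω => K ω = y' ∧ Dm ω = d) ∧ Z x y' = z
              then mp p (fun ω => K ω = y' ∧ Dm ω = d) else 0) := by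
    intro x z hx
    apply mul_left_cancel₀ (ne_of_gt (mul_pos hx hmDpos))
    have margFGD : mp p (fun ω => F ω = x ∧ G ω = z ∧ Dm ω = d)
        = ∑ y' ∈ Finset.univ.image K,
            mp p (fun ω => (F ω = x ∧ G ω = z ∧ Dm ω = d) ∧ K ω = y') :=
      (mp_marg _ K _ (fun ω => mem_image_self K ω)).symm
    have hCI4 := CI4 x z d
    rw [ind1 x d] at hCI4
    calc mp p (fun ω => F ω = x) * mp p (fun ω => Dm ω = d)
          * mp p (fun ω => G ω = z ∧ Dm ω = d)
        = mp p (fun ω => F ω = x ∧ G ω = z ∧ Dm ω = d) * mp p (fun ω => Dm ω = d) :=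
          hCI4.symm
      _ = (∑ y' ∈ Finset.univ.image K,
            mp p (fun ω => (F ω = x ∧ G ω = z ∧ Dm ω = d) ∧ K ω = y'))
            * mp p (fun ω => Dm ω = d) := by rw [← margFGD]
      _ = ∑ y' ∈ Finset.univ.image K,
            mp p (fun ω => (F ω = x ∧ G ω = z ∧ Dm ω = d) ∧ K ω = y')
            * mp p (fun ω => Dm ω = d) := Finset.sum_mul _ _ _
      _ = ∑ y' ∈ Finset.univ.image K,
            mp p (fun ω => F ω = x) * mp p (fun ω => Dm ω = d) *
            (if 0 < mp p (fun ω => K ω = y' ∧ Dm ω = d) ∧ Z x y' = z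
              then mp p (fun ω => K ω = y' ∧ Dm ω = d) else 0) := by
          apply Finset.sum_congr rfl
          intro y' _
          by_cases hky' : 0 < mp p (fun ω => K ω = y' ∧ Dm ω = d)
          · by_cases hzz : Z x y' = z
            · rw [if_pos ⟨hky', hzz⟩]
              have hquad : mp p (fun ω => (F ω = x ∧ G ω = z ∧ Dm ω = d) ∧ K ω = y')
                  = mp p (fun ω => F ω = x ∧ K ω = y' ∧ Dm ω = d) := by
                apply mp_congr_pos hp
                intro ω hpω
                constructor
                · intro ⟨⟨hb1, hb2, hb3⟩, hb4⟩
                  exact ⟨hb1, hb4, hb3⟩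
                · intro ⟨hb1, hb2, hb3⟩
                  have := uniqG x y' hx hky' ω hpω hb1 hb2 hb3
                  exact ⟨⟨hb1, this.trans hzz, hb3⟩, hb2⟩
              rw [hquad, CI2 x y' d, ind1 x d]
            · rw [if_neg (fun hc => hzz hc.2)]
              have hquad : mp p (fun ω => (F ω = x ∧ G ω = z ∧ Dm ω = d) ∧ K ω = y') = 0 := by
                apply mp_eq_zero hp
                intro ω hpω ⟨⟨hb1, hb2, hb3⟩, hb4⟩
                exact hzz ((uniqG x y' hx hky' ω hpω hb1 hb4 hb3).symm.trans hb2)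
              rw [hquad, zero_mul, mul_zero]
          · rw [if_neg (fun hc => hky' hc.1)]
            have hky0 : mp p (fun ω => K ω = y' ∧ Dm ω = d) = 0 :=
              le_antisymm (not_lt.1 hky') (mp_nonneg hp _)
            have hquad : mp p (fun ω => (F ω = x ∧ G ω = z ∧ Dm ω = d) ∧ K ω = y') = 0 := by
              have hle := mp_mono hp (p := p)
                (P := fun ω => (F ω = x ∧ G ω = z ∧ Dm ω = d) ∧ K ω = y')
                (Q := fun ω => K ω = y' ∧ Dm ω = d)
                (fun ω hb => ⟨hb.2, hb.1.2.2⟩)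
              have := mp_nonneg hp (fun ω => (F ω = x ∧ G ω = z ∧ Dm ω = d) ∧ K ω = y')
              rw [hky0] at hle
              linarith
            rw [hquad, zero_mul, mul_zero]
      _ = mp p (fun ω => F ω = x) * mp p (fun ω => Dm ω = d) *
          (∑ y' ∈ Finset.univ.image K,
            (if 0 < mp p (fun ω => K ω = y' ∧ Dm ω = d) ∧ Z x y' = z
              then mp p (fun ω => K ω = y' ∧ Dm ω = d) else 0)) := by
          rw [Finset.mul_sum]
  -- counting: uniformity of the positive G-fiber masses
  have sumKD : ∑ y' ∈ Finset.univ.image K, mp p (fun ω => K ω = y' ∧ Dm ω = d)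
      = mp p (fun ω => Dm ω = d) := by
    rw [← mp_marg (fun ω => Dm ω = d) K (Finset.univ.image K) (fun ω => mem_image_self K ω)]
    exact Finset.sum_congr rfl (fun y' _ => mp_congr (fun ω => and_comm))
  have cardSum : ∀ z, 0 < mp p (fun ω => G ω = z ∧ Dm ω = d) →
      (SF.card : ℝ) * mp p (fun ω => G ω = z ∧ Dm ω = d) = mp p (fun ω => Dm ω = d) := by
    intro z hz
    calc (SF.card : ℝ) * mp p (fun ω => G ω = z ∧ Dm ω = d)
        = ∑ _x ∈ SF, mp p (fun ω => G ω = z ∧ Dm ω = d) := by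
          rw [Finset.sum_const, nsmul_eq_mul]
      _ = ∑ x ∈ SF, ∑ y' ∈ Finset.univ.image K,
            (if 0 < mp p (fun ω => K ω = y' ∧ Dm ω = d) ∧ Z x y' = z
              then mp p (fun ω => K ω = y' ∧ Dm ω = d) else 0) :=
          Finset.sum_congr rfl (fun x hx => keySum x z (hposSF x hx))
      _ = ∑ y' ∈ Finset.univ.image K, ∑ x ∈ SF,
            (if 0 < mp p (fun ω => K ω = y' ∧ Dm ω = d) ∧ Z x y' = z
              then mp p (fun ω => K ω = y' ∧ Dm ω = d) else 0) := Finset.sum_comm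
      _ = ∑ y' ∈ Finset.univ.image K, mp p (fun ω => K ω = y' ∧ Dm ω = d) := by
          apply Finset.sum_congr rfl
          intro y' _
          by_cases hky' : 0 < mp p (fun ω => K ω = y' ∧ Dm ω = d)
          · obtain ⟨x₀, hx₀, hzx₀⟩ := surjZ y' z hky' hz
            have hx₀SF : x₀ ∈ SF := hmemSF x₀ hx₀
            rw [Finset.sum_eq_single_of_mem x₀ hx₀SF]
            · rw [if_pos ⟨hky', hzx₀⟩]
            · intro x hxSF hxx₀
              rw [if_neg]
              intro ⟨_, hzx⟩
              exact hxx₀ (injZ x x₀ y' (hposSF x hxSF) hx₀ hky' (hzx.trans hzx₀.symm))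
          · have hky0 : mp p (fun ω => K ω = y' ∧ Dm ω = d) = 0 :=
              le_antisymm (not_lt.1 hky') (mp_nonneg hp _)
            rw [Finset.sum_eq_zero (fun x _ => if_neg (fun hc => hky' hc.1)), hky0]
      _ = mp p (fun ω => Dm ω = d) := sumKD
  -- uniformity of F masses
  have hunif : ∀ x x', 0 < mp p (fun ω => F ω = x) → 0 < mp p (fun ω => F ω = x') →
      mp p (fun ω => F ω = x) = mp p (fun ω => F ω = x') := by
    intro x x' hx hx'
    have e1 := mGD_eq x y hx hmKDy
    have e2 := mGD_eq x' y hx' hmKDy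
    have c1 := cardSum (Z x y) (ZGDpos x y hx hmKDy)
    have c2 := cardSum (Z x' y) (ZGDpos x' y hx' hmKDy)
    rw [e1] at c1
    rw [e2] at c2
    have hcard0 : (SF.card : ℝ) ≠ 0 := by
      intro h
      rw [h, zero_mul] at c1
      linarith
    have hD0 : mp p (fun ω => Dm ω = d) ≠ 0 := ne_of_gt hmDpos
    have h5 := mul_left_cancel₀ hcard0 (c1.trans c2.symm)
    exact mul_right_cancel₀ hD0 h5
  -- final computation
  have hx₀pos : 0 < mp p (fun ω => F ω = F ω₀) := mp_pos hp ω₀ hω₀ rfl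
  have hx₀SF : F ω₀ ∈ SF := hmemSF _ hx₀pos
  set c : ℝ := mp p (fun ω => F ω = F ω₀) with hc
  have huniform : ∀ x ∈ SF, mp p (fun ω => F ω = x) = c :=
    fun x hx => hunif x (F ω₀) (hposSF x hx) hx₀pos
  have hsum1 : ∑ x ∈ Finset.univ.image F, mp p (fun ω => F ω = x) = 1 := by
    rw [← mp_true hs (p := p),
      ← mp_marg (fun _ => True) F (Finset.univ.image F) (fun ω => mem_image_self F ω)]
    exact Finset.sum_congr rfl (fun x _ => mp_congr (fun ω => by simp))
  have hzero_off : ∀ x ∈ Finset.univ.image F, x ∉ SF → mp p (fun ω => F ω = x) = 0 := by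
    intro x hx hnx
    rcases (mp_nonneg hp (fun ω => F ω = x)).lt_or_eq with h | h
    · exact absurd (Finset.mem_filter.2 ⟨hx, h⟩) hnx
    · exact h.symm
  have hsumSF : ∑ x ∈ SF, mp p (fun ω => F ω = x) = 1 := by
    rw [← hsum1]
    exact Finset.sum_subset (Finset.filter_subset _ _) hzero_off
  have hcardc : (SF.card : ℝ) * c = 1 := by
    calc (SF.card : ℝ) * c = ∑ _x ∈ SF, c := by rw [Finset.sum_const, nsmul_eq_mul]
      _ = ∑ x ∈ SF, mp p (fun ω => F ω = x) := (Finset.sum_congr rfl huniform).symm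
      _ = 1 := hsumSF
  have hHF : Hent p F = (SF.card : ℝ) * Real.negMulLog c := by
    rw [Hent_eq_sum_mp]
    calc ∑ x ∈ Finset.univ.image F, Real.negMulLog (mp p (fun ω => F ω = x))
        = ∑ x ∈ SF, Real.negMulLog (mp p (fun ω => F ω = x)) :=
          (Finset.sum_subset (Finset.filter_subset _ _) (fun x hx hnx => by
            rw [hzero_off x hx hnx, Real.negMulLog_zero])).symm
      _ = ∑ _x ∈ SF, Real.negMulLog c :=
          Finset.sum_congr rfl (fun x hx => by rw [huniform x hx])
      _ = (SF.card : ℝ) * Real.negMulLog c := by rw [Finset.sum_const, nsmul_eq_mul]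
  have hvne : (SF.card : ℝ) ≠ 0 := by
    intro h
    rw [h, zero_mul] at hcardc
    norm_num at hcardc
  have hcval : c = (SF.card : ℝ)⁻¹ :=
    (inv_eq_of_mul_eq_one_right hcardc).symm
  have hHlog : Hent p F = Real.log (SF.card : ℝ) := by
    rw [hHF, hcval, Real.negMulLog, Real.log_inv]
    field_simp
  have hva : a = Real.log (SF.card : ℝ) := hentF.trans hHlog
  have hv0 : SF.card ≠ 0 := by
    intro h
    rw [h] at hvne
    norm_num at hvne
  have hv1 : SF.card ≠ 1 := by
    intro h
    rw [h] at hva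
    simp only [Nat.cast_one, Real.log_one] at hva
    exact ha.ne' hva
  have hv2 : 2 ≤ SF.card := by omega
  refine ⟨(SF.card : ℤ), by exact_mod_cast hv2, ?_⟩
  rw [hva]
  norm_cast
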